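/- Let D be a noncommutative alternative division ring in which 2 ≠ 0 (i.e., (1+1 : D) ≠ 0), and suppose f, g : D → D are additive maps satisfying f(x) + (x*x)*g(x⁻¹) = 0 for all nonzero x ∈ D. Then f(x) = x*f(1) and g(x) = x*g(1) for all x ∈ D, and g(1) = -f(1). -/
import Mathlib


/-- An alternative division ring: a unital non-associative ring satisfying the
left and right alternative laws, with `1 ≠ 0`, in which every nonzero element
has a two-sided inverse. -/
class AlternativeDivisionRing (D : Type*) extends NonAssocRing D, Inv D where
  one_ne_zero : (1 : D) ≠ 0
  alt_left : ∀ x y : D, (x * x) * y = x * (x * y)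
  alt_right : ∀ x y : D, (y * x) * x = y * (x * x)
  mul_inv_cancel : ∀ x : D, x ≠ 0 → x * x⁻¹ = 1
  inv_mul_cancel : ∀ x : D, x ≠ 0 → x⁻¹ * x = 1

namespace ADR
variable {D : Type*} [AlternativeDivisionRing D]

lemma altL (x y : D) : (x * x) * y = x * (x * y) := AlternativeDivisionRing.alt_left x y
lemma altR (x y : D) : (y * x) * x = y * (x * x) := AlternativeDivisionRing.alt_right x y
lemma one_ne_zero' : (1 : D) ≠ 0 := AlternativeDivisionRing.one_ne_zero
lemma mulInv (x : D) (h : x ≠ 0) : x * x⁻¹ = 1 := AlternativeDivisionRing.mul_inv_cancel x h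
lemma invMul (x : D) (h : x ≠ 0) : x⁻¹ * x = 1 := AlternativeDivisionRing.inv_mul_cancel x h

/-- associator -/
def asc (a b c : D) : D := (a*b)*c - a*(b*c)

lemma asc_eq (a b c : D) : (a*b)*c = a*(b*c) + asc a b c := by simp [asc]

lemma asc_zero_iff {a b c : D} : asc a b c = 0 ↔ (a*b)*c = a*(b*c) := by
  simp [asc, sub_eq_zero]

lemma teich (a b c d : D) :
    asc (a*b) c d - asc a (b*c) d + asc a b (c*d) = a * asc b c d + asc a b c * d := by
  simp only [asc, mul_sub, sub_mul]
  abel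

lemma linL (a b c : D) : (a*b)*c + (b*a)*c = a*(b*c) + b*(a*c) := by
  have h := altL (a+b) c
  simp only [mul_add, add_mul] at h
  rw [altL a c, altL b c] at h
  linear_combination (norm := abel) h

lemma linR (a b c : D) : a*(b*c) + a*(c*b) = (a*b)*c + (a*c)*b := by
  have h := altR (b+c) a
  simp only [mul_add, add_mul] at h
  rw [altR b a, altR c a] at h
  linear_combination (norm := abel) -h

lemma asc_aab (a b : D) : asc a a b = 0 := by simp [asc, altL]
lemma asc_baa (a b : D) : asc b a a = 0 := by simp [asc, altR]

lemma asc_swap12 (a b c : D) : asc b a c = - asc a b c := by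
  have h := linL a b c
  simp only [asc]
  linear_combination (norm := abel) h

lemma asc_swap23 (a b c : D) : asc a c b = - asc a b c := by
  have h := linR a b c
  simp only [asc]
  linear_combination (norm := abel) -h

lemma asc_aba (a b : D) : asc a b a = 0 := by
  rw [asc_swap23, asc_aab, neg_zero]

lemma flex (a b : D) : (a*b)*a = a*(b*a) := by
  have := asc_aba a b
  simpa [asc, sub_eq_zero] using this

lemma asc_cycle (a b c : D) : asc c a b = asc a b c := by
  rw [asc_swap12, asc_swap23, neg_neg]

/-- cancel multiplication by two (needs 2 ≠ 0) -/
lemma twoCancel (h2 : (1+1 : D) ≠ 0) {z : D} (h : z + z = 0) : z = 0 := by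
  by_contra hz
  have h1 : (z + z) * z⁻¹ = 0 := by rw [h, zero_mul]
  rw [add_mul, mulInv z hz] at h1
  exact h2 h1

lemma twoCancelEq (h2 : (1+1 : D) ≠ 0) {x y : D} (h : x + x = y + y) : x = y := by
  have : (x - y) + (x - y) = 0 := by
    have := sub_eq_zero_of_eq h
    linear_combination (norm := abel) this
  have := twoCancel h2 this
  exact sub_eq_zero.mp this

/-- [a*a, a, w] = 0 -/
lemma asc_sq1 (h2 : (1+1 : D) ≠ 0) (a w : D) : asc (a*a) a w = 0 := by
  have t := teich a a a w
  rw [asc_aab, asc_aab, asc_baa] at t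
  have h1 : asc a (a*a) w = - asc (a*a) a w := asc_swap12 (a*a) a w
  rw [h1] at t
  simp only [mul_zero, zero_mul, add_zero] at t
  -- t : asc (a*a) a w - -asc (a*a) a w + 0 = a * 0 + 0 * w
  have : asc (a*a) a w + asc (a*a) a w = 0 := by
    linear_combination (norm := abel) t
  exact twoCancel h2 this

lemma asc_sq2 (h2 : (1+1 : D) ≠ 0) (a w : D) : asc a (a*a) w = 0 := by
  rw [asc_swap12, asc_sq1 h2, neg_zero]
lemma asc_sq3 (h2 : (1+1 : D) ≠ 0) (a w : D) : asc (a*a) w a = 0 := by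
  rw [asc_swap23, asc_sq1 h2, neg_zero]
lemma asc_sq4 (h2 : (1+1 : D) ≠ 0) (a w : D) : asc w (a*a) a = 0 := by
  rw [asc_swap12, asc_sq3 h2, neg_zero]
lemma asc_sq5 (h2 : (1+1 : D) ≠ 0) (a w : D) : asc w a (a*a) = 0 := by
  rw [asc_swap23, asc_sq4 h2, neg_zero]
lemma asc_sq6 (h2 : (1+1 : D) ≠ 0) (a w : D) : asc a w (a*a) = 0 := by
  rw [asc_swap12, asc_sq5 h2, neg_zero]

/-- goal2 : [a,b,a*d] = [a*a,b,d] - a*[a,b,d] -/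
lemma goal2 (h2 : (1+1 : D) ≠ 0) (a b d : D) :
    asc a b (a*d) = asc (a*a) b d - a * asc a b d := by
  -- L_T5 from teich a a b d
  have t5 := teich a a b d
  rw [asc_aab, asc_aab] at t5
  -- t5 : asc (a*a) b d - asc a (a*b) d + 0 = a * asc a b d + 0 * d
  -- L_T2 from teich a b a d
  have t2 := teich a b a d
  rw [asc_aba] at t2
  have e1 : asc b a d = - asc a b d := asc_swap12 a b d
  rw [e1] at t2
  -- t2 : asc (a*b) a d - asc a (b*a) d + asc a b (a*d) = a * -asc a b d + 0 * d
  -- L_T4 from teich b a a d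
  have t4 := teich b a a d
  rw [asc_aab, asc_baa] at t4
  -- t4 : asc (b*a) a d - asc b (a*a) d + asc b a (a*d) = b * 0 + 0 * d
  have e2 : asc (b*a) a d = - asc a (b*a) d := asc_swap12 a (b*a) d
  have e3 : asc b (a*a) d = - asc (a*a) b d := asc_swap12 (a*a) b d
  have e4 : asc b a (a*d) = - asc a b (a*d) := asc_swap12 a b (a*d)
  rw [e2, e3, e4] at t4
  have e5 : asc (a*b) a d = - asc a (a*b) d := asc_swap12 a (a*b) d
  rw [e5] at t2
  -- combine: 2*(goal) from t5, t2, t4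
  have key : (asc a b (a*d) - (asc (a*a) b d - a * asc a b d))
      + (asc a b (a*d) - (asc (a*a) b d - a * asc a b d)) = 0 := by
    simp only [mul_neg, mul_zero, zero_mul, add_zero, zero_add] at t2 t4 t5
    linear_combination (norm := abel) t2 - t4 - t5
  have := twoCancel h2 key
  exact sub_eq_zero.mp this

/-- [a, b*a, d] = a * [a,b,d] -/
lemma lmf' (h2 : (1+1 : D) ≠ 0) (a b d : D) :
    asc a (b*a) d = a * asc a b d := by
  have t4 := teich b a a d
  rw [asc_aab, asc_baa] at t4
  have e2 : asc (b*a) a d = - asc a (b*a) d := asc_swap12 a (b*a) d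
  have e3 : asc b (a*a) d = - asc (a*a) b d := asc_swap12 (a*a) b d
  have e4 : asc b a (a*d) = - asc a b (a*d) := asc_swap12 a b (a*d)
  rw [e2, e3, e4] at t4
  have g2 := goal2 h2 a b d
  simp only [mul_zero, zero_mul, add_zero] at t4
  linear_combination (norm := abel) - t4 - g2

/-- left Moufang -/
lemma moufL (h2 : (1+1 : D) ≠ 0) (a b c : D) :
    ((a*b)*a)*c = a*(b*(a*c)) := by
  have e1 : b*(a*c) = (b*a)*c - asc b a c := by simp [asc]
  have e2 : asc b a c = - asc a b c := asc_swap12 a b c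
  rw [e1, e2, mul_sub, mul_neg]
  have e3 : a*((b*a)*c) = (a*(b*a))*c - asc a (b*a) c := by simp [asc]
  rw [e3, lmf' h2 a b c, ← flex a b]
  abel

end ADR

namespace ADR2
open ADR
variable {D : Type*} [AlternativeDivisionRing D]

/-- mirror of goal2 : [d*a, b, a] = [d, b, a*a] - [d,b,a]*a -/
lemma goal2R (h2 : (1+1 : D) ≠ 0) (a b d : D) :
    asc (d*a) b a = asc d b (a*a) - asc d b a * a := by
  -- T5R := teich d b a a ; T2R := teich d a b a ; T4R := teich d a a b
  have t5 := teich d b a a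
  rw [asc_baa, asc_baa] at t5
  -- t5 : 0 - asc d (b*a) a + asc d b (a*a) = d * 0 + asc d b a * a
  have t2 := teich d a b a
  rw [asc_aba] at t2
  have e1 : asc d a b = - asc d b a := asc_swap23 d b a
  rw [e1] at t2
  -- t2 : asc (d*a) b a - asc d (a*b) a + asc d a (b*a) = d * 0 + -asc d b a * a
  have t4 := teich d a a b
  rw [asc_aab, asc_baa] at t4
  have e2 : asc (d*a) a b = - asc (d*a) b a := asc_swap23 (d*a) b a
  have e3 : asc d (a*a) b = - asc d b (a*a) := asc_swap23 d b (a*a)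
  have e4 : asc d a (a*b) = - asc d (a*b) a := asc_swap23 d (a*b) a
  rw [e2, e3, e4] at t4
  have e5 : asc d a (b*a) = - asc d (b*a) a := asc_swap23 d (b*a) a
  rw [e5] at t2
  have key : (asc (d*a) b a - (asc d b (a*a) - asc d b a * a))
      + (asc (d*a) b a - (asc d b (a*a) - asc d b a * a)) = 0 := by
    simp only [mul_zero, zero_mul, add_zero, zero_add, neg_mul] at t2 t4 t5
    linear_combination (norm := abel) t2 - t4 - t5
  exact sub_eq_zero.mp (twoCancel h2 key)

/-- [d, a*b, a] = [d,b,a]*a -/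
lemma rmf' (h2 : (1+1 : D) ≠ 0) (a b d : D) :
    asc d (a*b) a = asc d b a * a := by
  have t4 := teich d a a b
  rw [asc_aab, asc_baa] at t4
  have e2 : asc (d*a) a b = - asc (d*a) b a := asc_swap23 (d*a) b a
  have e3 : asc d (a*a) b = - asc d b (a*a) := asc_swap23 d b (a*a)
  have e4 : asc d a (a*b) = - asc d (a*b) a := asc_swap23 d (a*b) a
  rw [e2, e3, e4] at t4
  have g2 := goal2R h2 a b d
  simp only [mul_zero, zero_mul, add_zero] at t4
  linear_combination (norm := abel) - t4 - g2

/-- right Moufang -/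
lemma moufR (h2 : (1+1 : D) ≠ 0) (a b z : D) :
    ((z*a)*b)*a = z*(a*(b*a)) := by
  have e0 : a*(b*a) = (a*b)*a := (flex a b).symm
  rw [e0]
  have e1 : (z*a)*b = z*(a*b) + asc z a b := asc_eq z a b
  rw [e1, add_mul]
  have e2 : (z*(a*b))*a = z*((a*b)*a) + asc z (a*b) a := asc_eq z (a*b) a
  rw [e2, rmf' h2 a b z]
  have e3 : asc z b a = - asc z a b := asc_swap23 z a b
  rw [e3, neg_mul]
  abel

/-- [a, b, c*a] = a * [a,b,c] -/
lemma lmf'' (h2 : (1+1 : D) ≠ 0) (a b c : D) :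
    asc a b (c*a) = a * asc a b c := by
  have e0 : asc a b (c*a) = asc (c*a) a b := (asc_cycle a b (c*a)).symm
  have t := teich c a a b
  rw [asc_aab, asc_baa] at t
  -- t : asc (c*a) a b - asc c (a*a) b + asc c a (a*b) = c * 0 + 0 * b
  have e1 : asc c a (a*b) = - asc a c (a*b) := asc_swap12 a c (a*b)
  have g2 := goal2 h2 a c b
  -- g2 : asc a c (a*b) = asc (a*a) c b - a * asc a c b
  have e2 : asc c (a*a) b = - asc (a*a) c b := asc_swap12 (a*a) c b
  have e3 : asc a c b = - asc a b c := asc_swap23 a b c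
  rw [e0]
  rw [e1, g2, e2, e3] at t
  simp only [mul_zero, zero_mul, add_zero, mul_neg, neg_neg, neg_sub] at t
  linear_combination (norm := abel) t

/-- [a*b, c, a] = [a,b,c]*a -/
lemma ascMM (h2 : (1+1 : D) ≠ 0) (a b c : D) :
    asc (a*b) c a = asc a b c * a := by
  have t := teich a b c a
  rw [asc_aba] at t
  have e1 : asc b c a = asc a b c := (asc_cycle b c a).symm
  have e2 := lmf'' h2 a b c
  rw [e1, e2] at t
  linear_combination (norm := abel) t

/-- middle Moufang -/
lemma moufM (h2 : (1+1 : D) ≠ 0) (a b c : D) :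
    (a*b)*(c*a) = (a*(b*c))*a := by
  have e1 : (a*b)*(c*a) = ((a*b)*c)*a - asc (a*b) c a := by simp [asc]
  have e2 : (a*(b*c))*a = ((a*b)*c)*a - asc a b c * a := by
    rw [asc_eq a b c, add_mul]; abel
  rw [e1, e2, ascMM h2]

/-- no zero divisors -/
lemma noZD (h2 : (1+1 : D) ≠ 0) {p q : D} (hp : p ≠ 0) (hq : q ≠ 0) : p * q ≠ 0 := by
  intro h0
  have hm := moufM h2 p q q⁻¹
  rw [h0, zero_mul, mulInv q hq, mul_one] at hm
  -- lhs = 0*(q⁻¹*p) = 0 ; rhs = (p*1)*p = p*p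
  have hpp : p * p = 0 := by rw [← hm]
  have := altL p p⁻¹
  rw [hpp, zero_mul, mulInv p hp, mul_one] at this
  exact hp this.symm

lemma mulCancelL (h2 : (1+1 : D) ≠ 0) {p q : D} (hp : p ≠ 0) (h : p * q = 0) : q = 0 := by
  by_contra hq; exact noZD h2 hp hq h

lemma mulCancelR (h2 : (1+1 : D) ≠ 0) {p q : D} (hq : q ≠ 0) (h : p * q = 0) : p = 0 := by
  by_contra hp; exact noZD h2 hp hq h

end ADR2

namespace ADR3
open ADR ADR2
variable {D : Type*} [AlternativeDivisionRing D]

/-- inverse property, left -/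
lemma ipL (h2 : (1+1 : D) ≠ 0) {u v : D} (huv : u*v = 1) (hvu : v*u = 1) (z : D) :
    u*(v*z) = z := by
  have s1 : ∀ w : D, u*(v*w) + v*(u*w) = w + w := by
    intro w
    have h := linL u v w
    rw [huv, hvu, one_mul] at h
    exact h.symm
  have s2 : ∀ w : D, u*(v*(u*w)) = u*w := by
    intro w
    have h := (moufL h2 u v w).symm
    rwa [huv, one_mul] at h
  have s3 : ∀ w : D, v*(u*(v*w)) = v*w := by
    intro w
    have h := (moufL h2 v u w).symm
    rwa [hvu, one_mul] at h
  -- B(Az) = Az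
  have hBA : v*(u*(u*(v*z))) = u*(v*z) := by
    have h := s1 (u*(v*z))
    rw [s2 (v*z)] at h
    exact add_left_cancel h
  -- B(Az) = Bz
  have hA : u*(v*z) = z + z - v*(u*z) := by
    have h := s1 z
    linear_combination (norm := abel) h
  have hBA2 : v*(u*(u*(v*z))) = v*(u*z) := by
    rw [hA]
    have e : u*(z + z - v*(u*z)) = u*z + u*z - u*(v*(u*z)) := by
      rw [mul_sub, mul_add]
    rw [e]
    have e2 : v*(u*z + u*z - u*(v*(u*z))) = v*(u*z) + v*(u*z) - v*(u*(v*(u*z))) := by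
      rw [mul_sub, mul_add]
    rw [e2, s3 (u*z)]
    abel
  have hAB : u*(v*z) = v*(u*z) := by rw [← hBA, hBA2]
  have h := s1 z
  rw [← hAB] at h
  exact twoCancelEq h2 h

/-- inverse property, right -/
lemma ipR (h2 : (1+1 : D) ≠ 0) {u v : D} (huv : u*v = 1) (hvu : v*u = 1) (z : D) :
    (z*u)*v = z := by
  have s1 : ∀ w : D, (w*u)*v + (w*v)*u = w + w := by
    intro w
    have h := linR w u v
    rw [huv, hvu, mul_one] at h
    linear_combination (norm := abel) -h
  have s2 : ∀ w : D, ((w*u)*v)*u = w*u := by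
    intro w
    have h := moufR h2 u v w
    rw [hvu, mul_one] at h
    exact h
  have s3 : ∀ w : D, ((w*v)*u)*v = w*v := by
    intro w
    have h := moufR h2 v u w
    rw [huv, mul_one] at h
    exact h
  -- B'(A'z) = A'z
  have hBA : ((((z*u)*v)*v)*u) = (z*u)*v := by
    have h := s1 ((z*u)*v)
    rw [s2 z] at h
    -- h : ((z*u)*v*u)*v ... careful: h : (((z*u)*v)*u)*v + (((z*u)*v)*v)*u = A'z + A'z
    -- h : (z*u)*v + (((z*u)*v)*v)*u = (z*u)*v + (z*u)*v
    exact add_left_cancel h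
  -- B'(A'z) = B'z
  have hA : (z*u)*v = z + z - (z*v)*u := by
    have h := s1 z
    linear_combination (norm := abel) h
  have hBA2 : (((z*u)*v)*v)*u = (z*v)*u := by
    rw [hA]
    have e : (z + z - (z*v)*u)*v = z*v + z*v - ((z*v)*u)*v := by
      rw [sub_mul, add_mul]
    rw [e]
    have e2 : (z*v + z*v - ((z*v)*u)*v)*u = (z*v)*u + (z*v)*u - (((z*v)*u)*v)*u := by
      rw [sub_mul, add_mul]
    rw [e2, s3 z]
    abel
  have hAB : (z*u)*v = (z*v)*u := by rw [← hBA, hBA2]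
  have h := s1 z
  rw [← hAB] at h
  exact twoCancelEq h2 h

end ADR3

namespace ADR4
open ADR ADR2 ADR3
variable {D : Type*} [AlternativeDivisionRing D]

lemma asc_us_sq (h2 : (1+1 : D) ≠ 0) (u s : D) : asc u s (u*u) = 0 := by
  have g := goal2 h2 u s u
  rw [asc_aba, mul_zero, sub_zero] at g
  rw [g, asc_swap23, asc_sq1 h2, neg_zero]

lemma pow3 (h2 : (1+1 : D) ≠ 0) (u w : D) : ((u*u)*u)*w = (u*u)*(u*w) :=
  asc_zero_iff.mp (asc_sq1 h2 u w)

lemma bigLemma (h2 : (1+1 : D) ≠ 0) (u s e : D) :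
    (u*s)*((u*u)*e) + (s*u)*((u*u)*e) + ((u*s)*(u*u))*e + ((u*u)*(s*u))*e
      - ((u*u)*(s*(u*e)) + (u*u)*(s*(u*e)))
      - (s*(u*(u*(u*e))) + s*(u*(u*(u*e))))
    = -( ((u*u)*s)*(u*e) - (((u*s)*u)*(u*e) + ((u*s)*u)*(u*e)) + ((s*u)*u)*(u*e) ) := by
  have S1 := linL (u*s) (u*u) e
  have S2 := linL (s*u) (u*u) e
  have S3 : (u*u)*((u*s)*e) + (u*u)*((s*u)*e)
      = u*(u*(u*(s*e))) + (u*u)*(s*(u*e)) := by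
    have hl := linL u s e
    have hm := congrArg (fun t => (u*u) * t) hl
    simp only [mul_add] at hm
    rw [altL u (u*(s*e))] at hm
    exact hm
  have S5 : ((u*u)*s)*(u*e) + (s*(u*u))*(u*e)
      = (u*u)*(s*(u*e)) + s*(u*(u*(u*e))) := by
    have hl := linL (u*u) s (u*e)
    rwa [altL u (u*e)] at hl
  have S6 : ((u*s)*u)*(u*e)
      = u*((s*(u*u))*e) + u*(((u*u)*s)*e) - u*(u*(u*(s*e))) := by
    have m1 := moufL h2 u s (u*e)
    rw [show u*(u*e) = (u*u)*e from (altL u e).symm] at m1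
    have hl := linL s (u*u) e
    have e2 : s*((u*u)*e) = (s*(u*u))*e + ((u*u)*s)*e - (u*u)*(s*e) := by
      linear_combination (norm := abel) -hl
    rw [e2, mul_sub, mul_add, altL u (s*e)] at m1
    exact m1
  have S7a := linL ((u*u)*s) u e
  have S7b := linL (s*(u*u)) u e
  have S8 : (s*((u*u)*u))*e + (((u*u)*u)*s)*e
      = s*(u*(u*(u*e))) + u*(u*(u*(s*e))) := by
    have hl := linL s ((u*u)*u) e
    rw [pow3 h2 u e, altL u (u*e), pow3 h2 u (s*e), altL u (u*(s*e))] at hl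
    exact hl
  have E1 : ((u*u)*(u*s))*e = (((u*u)*u)*s)*e := by
    rw [← asc_zero_iff.mp (asc_sq1 h2 u s)]
  have E2 : (u*((u*u)*s))*e = (((u*u)*u)*s)*e := by
    have : u*((u*u)*s) = (u*(u*u))*s := (asc_zero_iff.mp (asc_sq2 h2 u s)).symm
    rw [this, ← flex u u]
  have E3 : ((s*u)*(u*u))*e = (s*((u*u)*u))*e := by
    have e1 : (s*u)*(u*u) = ((s*u)*u)*u := (altR u (s*u)).symm
    have e2 : (s*u)*u = s*(u*u) := altR u s
    have e3 : (s*(u*u))*u = s*((u*u)*u) := asc_zero_iff.mp (asc_sq4 h2 u s)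
    rw [e1, e2, e3]
  have E4 : ((s*(u*u))*u)*e = (s*((u*u)*u))*e := by
    rw [asc_zero_iff.mp (asc_sq4 h2 u s)]
  have E5 : (u*(s*(u*u)))*e = ((u*s)*(u*u))*e := by
    rw [← asc_zero_iff.mp (asc_us_sq h2 u s)]
  have E6 : (((u*u)*s)*u)*e = ((u*u)*(s*u))*e := by
    rw [asc_zero_iff.mp (asc_sq3 h2 u s)]
  have Eq5 : (s*(u*u))*(u*e) = ((s*u)*u)*(u*e) := by
    rw [altR u s]
  linear_combination (norm := abel) - S1 - S2 - S3 + S5 + S5 + S5 - S6 - S6 + S7a + S7a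
    + S7b + S7b - S8 + E1 - E2 - E2 + E3 - E4 - E4 - E5 - E5 - E6 - E6 - Eq5

end ADR4

namespace ADR5
open ADR ADR2 ADR3 ADR4
variable {D : Type*} [AlternativeDivisionRing D]

lemma delta_sq_eq (u s : D) :
    u*(u*s - s*u) - (u*s - s*u)*u
      = (u*u)*s - ((u*s)*u + (u*s)*u) + (s*u)*u := by
  have e1 : u*(u*s) = (u*u)*s := (altL u s).symm
  simp only [mul_sub, sub_mul]
  rw [e1, ← flex u s]
  abel

lemma delta_mul (u p q : D) :
    u*(p*q) - (p*q)*u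
      = (u*p - p*u)*q + p*(u*q - q*u) - (asc u p q + asc u p q + asc u p q) := by
  have h1 : asc p u q = - asc u p q := asc_swap12 u p q
  have h2' : asc p q u = asc u p q := (asc_cycle p q u).symm
  simp only [asc] at h1 h2'
  simp only [asc, mul_sub, sub_mul]
  linear_combination (norm := abel) h1 - h2'

lemma herstein (h2 : (1+1 : D) ≠ 0) (u : D)
    (hD2 : ∀ s : D, (u*u)*s - ((u*s)*u + (u*s)*u) + (s*u)*u = 0) :
    ∀ a : D, u*a = a*u := by
  intro a
  by_contra hne
  set b := u*a - a*u with hb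
  have hbne : b ≠ 0 := sub_ne_zero.mpr hne
  have hub : u*b - b*u = 0 := by
    rw [hb, delta_sq_eq u a, hD2 a]
  -- delta(a*a) = a*b + b*a
  have hd1 : u*(a*a) - (a*a)*u = a*b + b*a := by
    have e1 : (u*a)*a = u*(a*a) := asc_zero_iff.mp (asc_baa a u)
    have e2 : (a*a)*u = a*(a*u) := altL a u
    rw [← e1, e2, hb]
    simp only [mul_sub, sub_mul]
    rw [← flex a u]
    abel
  -- delta(ab) + delta(ba) = 2 b*b
  have hsum : (u*(a*b) - (a*b)*u) + (u*(b*a) - (b*a)*u) = b*b + b*b := by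
    have m1 := delta_mul u a b
    have m2 := delta_mul u b a
    rw [hub, mul_zero] at m1
    rw [hub, zero_mul] at m2
    rw [← hb] at m1 m2
    -- m1 : u*(a*b) - (a*b)*u = b*q... : (u*a - a*u) = b
    have e3 : asc u b a = - asc u a b := asc_swap23 u a b
    rw [e3] at m2
    have hbb : u*b - b*u = 0 := hub
    -- b*(u*a - a*u) in m2 is b*b
    linear_combination (norm := abel) m1 + m2
  -- delta^2(a*a) = 0
  have hzero : u*(u*(a*a) - (a*a)*u) - (u*(a*a) - (a*a)*u)*u = 0 := by
    rw [delta_sq_eq u (a*a), hD2 (a*a)]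
  rw [hd1] at hzero
  have hexp : u*(a*b + b*a) - (a*b + b*a)*u
      = (u*(a*b) - (a*b)*u) + (u*(b*a) - (b*a)*u) := by
    simp only [mul_add, add_mul]; abel
  rw [hexp, hsum] at hzero
  have : b*b = 0 := twoCancel h2 hzero
  exact noZD h2 hbne hbne this

end ADR5

namespace ADR6
open ADR ADR2 ADR3 ADR4 ADR5
variable {D : Type*} [AlternativeDivisionRing D]

lemma inv_ne_zero' {x : D} (hx : x ≠ 0) : x⁻¹ ≠ 0 := by
  intro h
  have := mulInv x hx
  rw [h, mul_zero] at this
  exact one_ne_zero' this.symm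

lemma ipL1 (h2 : (1+1 : D) ≠ 0) {x : D} (hx : x ≠ 0) (z : D) : x*(x⁻¹*z) = z :=
  ipL h2 (mulInv x hx) (invMul x hx) z
lemma ipL2 (h2 : (1+1 : D) ≠ 0) {x : D} (hx : x ≠ 0) (z : D) : x⁻¹*(x*z) = z :=
  ipL h2 (invMul x hx) (mulInv x hx) z
lemma ipR1 (h2 : (1+1 : D) ≠ 0) {x : D} (hx : x ≠ 0) (z : D) : (z*x)*x⁻¹ = z :=
  ipR h2 (mulInv x hx) (invMul x hx) z
lemma ipR2 (h2 : (1+1 : D) ≠ 0) {x : D} (hx : x ≠ 0) (z : D) : (z*x⁻¹)*x = z :=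
  ipR h2 (invMul x hx) (mulInv x hx) z

lemma invUnique (h2 : (1+1 : D) ≠ 0) {v w : D} (hv : v ≠ 0)
    (h1 : w*v = 1) (h1' : v*w = 1) : w = v⁻¹ := by
  have := ipR1 h2 hv w
  rw [h1, one_mul] at this
  exact this.symm

lemma inv_inv' (h2 : (1+1 : D) ≠ 0) {x : D} (hx : x ≠ 0) : (x⁻¹)⁻¹ = x :=
  (invUnique h2 (inv_ne_zero' hx) (mulInv x hx) (invMul x hx)).symm

/-- square is invertible with inverse x⁻¹ * x⁻¹ -/
lemma sq_inv_left (h2 : (1+1 : D) ≠ 0) {x : D} (hx : x ≠ 0) (z : D) :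
    (x⁻¹*x⁻¹)*((x*x)*z) = z := by
  rw [altL x⁻¹ ((x*x)*z), altL x z, ipL2 h2 hx (x*z), ipL2 h2 hx z]
lemma sq_inv_right (h2 : (1+1 : D) ≠ 0) {x : D} (hx : x ≠ 0) (z : D) :
    (x*x)*((x⁻¹*x⁻¹)*z) = z := by
  rw [altL x ((x⁻¹*x⁻¹)*z), altL x⁻¹ z, ipL1 h2 hx (x⁻¹*z), ipL1 h2 hx z]

/-- mixed associators vanish -/
lemma asc_zxxi (h2 : (1+1 : D) ≠ 0) {x : D} (hx : x ≠ 0) (z : D) : asc z x x⁻¹ = 0 := by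
  simp [asc, ipR1 h2 hx z, mulInv x hx]
lemma asc_zxix (h2 : (1+1 : D) ≠ 0) {x : D} (hx : x ≠ 0) (z : D) : asc z x⁻¹ x = 0 := by
  simp [asc, ipR2 h2 hx z, invMul x hx]
lemma asc_xzxi (h2 : (1+1 : D) ≠ 0) {x : D} (hx : x ≠ 0) (z : D) : asc x z x⁻¹ = 0 := by
  rw [asc_swap12, asc_zxxi h2 hx, neg_zero]
lemma asc_xizx (h2 : (1+1 : D) ≠ 0) {x : D} (hx : x ≠ 0) (z : D) : asc x⁻¹ z x = 0 := by
  rw [asc_swap12, asc_zxix h2 hx, neg_zero]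
lemma asc_xxiz (h2 : (1+1 : D) ≠ 0) {x : D} (hx : x ≠ 0) (z : D) : asc x x⁻¹ z = 0 := by
  rw [asc_cycle x⁻¹ z x]
  exact asc_xizx h2 hx z
lemma asc_xixz (h2 : (1+1 : D) ≠ 0) {x : D} (hx : x ≠ 0) (z : D) : asc x⁻¹ x z = 0 := by
  rw [asc_cycle x z x⁻¹]
  exact asc_xzxi h2 hx z

end ADR6

namespace ADRF
open ADR ADR2 ADR3 ADR4 ADR5 ADR6
variable {D : Type*} [AlternativeDivisionRing D]

section Func
variable (h2 : (1+1 : D) ≠ 0) (F G : D → D)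
variable (hFa : ∀ x y : D, F (x+y) = F x + F y)
variable (hGa : ∀ x y : D, G (x+y) = G x + G y)
variable (hFG : ∀ x : D, x ≠ 0 → F x + (x*x) * G x⁻¹ = 0)
variable (hF1 : F 1 = 0)

include hFa in
lemma F0 : F 0 = 0 := by
  have := hFa 0 0
  rw [add_zero] at this
  linear_combination (norm := abel) -this

include hFa in
lemma Fneg : ∀ x : D, F (-x) = - F x := by
  intro x
  have := hFa x (-x)
  rw [add_neg_cancel, F0 F hFa] at this
  linear_combination (norm := abel) -this

include hFa in
lemma Fsub : ∀ x y : D, F (x - y) = F x - F y := by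
  intro x y
  have := hFa (x - y) y
  rw [sub_add_cancel] at this
  linear_combination (norm := abel) -this

include h2 hFa hGa hFG hF1 in
lemma star : ∀ x : D, F (x*x) = x * F x + x * F x := by
  intro x
  by_cases hx0 : x = 0
  · rw [hx0, mul_zero, zero_mul, F0 F hFa, add_zero]
  by_cases hq0' : x + 1 = 0
  · have hx : x = -1 := eq_neg_of_add_eq_zero_left hq0'
    subst hx
    rw [neg_mul_neg, one_mul, hF1, Fneg F hFa 1, hF1]
    simp
  obtain ⟨q, hq⟩ : ∃ q : D, q = x + 1 := ⟨x+1, rfl⟩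
  obtain ⟨p, hp⟩ : ∃ p : D, p = x * q := ⟨x*q, rfl⟩
  have hq0 : q ≠ 0 := by rw [hq]; exact hq0'
  have hpq : x * q = q * x := by rw [hq, mul_add, add_mul, mul_one, one_mul]
  have hpe : p = x*x + x := by rw [hp, hq, mul_add, mul_one]
  have hppos : p ≠ 0 := by rw [hp]; exact noZD h2 hx0 hq0
  have hw1 : (x⁻¹ - q⁻¹) * p = 1 := by
    rw [sub_mul, hp, ipL2 h2 hx0 q, hpq, ipL2 h2 hq0 x, hq]
    abel
  have hw2 : p * (x⁻¹ - q⁻¹) = 1 := by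
    rw [mul_sub, hp, ipR1 h2 hq0 x, hpq, ipR1 h2 hx0 q, hq]
    abel
  have hpinv : p⁻¹ = x⁻¹ - q⁻¹ := (invUnique h2 hppos hw1 hw2).symm
  have hGp : G p⁻¹ = G x⁻¹ - G q⁻¹ := by
    rw [hpinv]
    have := hGa (x⁻¹ - q⁻¹) q⁻¹
    rw [sub_add_cancel] at this
    linear_combination (norm := abel) -this
  have hGx : (x*x) * G x⁻¹ = - F x := by
    have := hFG x hx0
    linear_combination (norm := abel) this
  have hGx' : G x⁻¹ = -((x⁻¹*x⁻¹) * F x) := by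
    have h' := congrArg (fun t => (x⁻¹*x⁻¹) * t) hGx
    simp only [mul_neg] at h'
    rwa [sq_inv_left h2 hx0] at h'
  have hFq : F q = F x := by rw [hq, hFa, hF1, add_zero]
  have hGq : (q*q) * G q⁻¹ = - F x := by
    have := hFG q hq0
    rw [hFq] at this
    linear_combination (norm := abel) this
  have hGq' : G q⁻¹ = -((q⁻¹*q⁻¹) * F x) := by
    have h' := congrArg (fun t => (q⁻¹*q⁻¹) * t) hGq
    simp only [mul_neg] at h'
    rwa [sq_inv_left h2 hq0] at h'
  have claim1 : ∀ C : D, (p*p)*((x⁻¹*x⁻¹)*C) = (x*x)*C + x*C + x*C + C := by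
    intro C
    rw [altL p ((x⁻¹*x⁻¹)*C)]
    have e1 : p * ((x⁻¹*x⁻¹)*C) = C + x⁻¹*C := by
      rw [hpe, add_mul, sq_inv_right h2 hx0, altL x⁻¹ C, ipL1 h2 hx0 (x⁻¹*C)]
    rw [e1, mul_add, hpe, add_mul, add_mul, altL x (x⁻¹*C), ipL1 h2 hx0 C]
    abel
  have hx1 : x = q - 1 := by rw [hq]; abel
  have hpe2 : p = q*q - q := by rw [hp, hpq, hx1, mul_sub, mul_one]
  have hxx : x*x = (q*q - q) - (q - 1) := by
    rw [hx1, sub_mul, mul_sub, mul_one, one_mul]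
  have hxxq : ∀ C : D, (x*x) * C = ((q*q)*C - q*C) - (q*C - C) := by
    intro C
    rw [hxx, sub_mul, sub_mul, sub_mul, one_mul]
  have claim2 : ∀ C : D, (p*p)*((q⁻¹*q⁻¹)*C) = (x*x)*C := by
    intro C
    rw [altL p ((q⁻¹*q⁻¹)*C)]
    have e1 : p * ((q⁻¹*q⁻¹)*C) = C - q⁻¹*C := by
      rw [hpe2, sub_mul, sq_inv_right h2 hq0, altL q⁻¹ C, ipL1 h2 hq0 (q⁻¹*C)]
    rw [e1, mul_sub, hpe2, sub_mul, sub_mul, altL q (q⁻¹*C), ipL1 h2 hq0 C,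
      hxxq C]
  have hFp : F p + (p*p)*G p⁻¹ = 0 := hFG p hppos
  rw [hpe, hFa (x*x) x, ← hpe, hGp, mul_sub, hGx', hGq', mul_neg, mul_neg,
    claim1 (F x), claim2 (F x), hxxq (F x)] at hFp
  linear_combination (norm := abel) hFp

include h2 hFa hGa hFG hF1 in
lemma R3 : ∀ x y : D, F (x*y + y*x) = x*F y + x*F y + y*F x + y*F x := by
  intro x y
  have h := star h2 F G hFa hGa hFG hF1 (x+y)
  have e : (x+y)*(x+y) = x*x + (x*y + y*x) + y*y := by
    rw [mul_add, add_mul, add_mul]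
    abel
  rw [e, hFa (x*x + (x*y + y*x)) (y*y), hFa (x*x) (x*y + y*x), hFa x y] at h
  simp only [mul_add, add_mul] at h
  rw [star h2 F G hFa hGa hFG hF1 x, star h2 F G hFa hGa hFG hF1 y] at h
  linear_combination (norm := abel) h

include h2 hFa hGa hFG hF1 in
lemma Finv : ∀ v : D, v ≠ 0 → F v⁻¹ = -((v⁻¹*v⁻¹) * F v) := by
  intro v hv
  have h := R3 h2 F G hFa hGa hFG hF1 v v⁻¹
  rw [mulInv v hv, invMul v hv, hFa 1 1, hF1, add_zero] at h
  have key : v*F v⁻¹ + v⁻¹*F v = 0 := by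
    apply twoCancel h2
    linear_combination (norm := abel) -h
  have e1 : F v⁻¹ = v⁻¹*(v*F v⁻¹) := (ipL2 h2 hv (F v⁻¹)).symm
  have e2 : v*F v⁻¹ = -(v⁻¹*F v) := by linear_combination (norm := abel) key
  rw [e1, e2, mul_neg, altL v⁻¹ (F v)]

include h2 hFa hGa hFG hF1 in
lemma Omega : ∀ u : D, u ≠ 0 → ∀ x : D,
    (x*u⁻¹ + u⁻¹*x)*F u + (x*u + u*x)*((u⁻¹*u⁻¹)*F u)
      = (u*(x*((u⁻¹*u⁻¹)*F u)) + u*(x*((u⁻¹*u⁻¹)*F u)))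
        + (u⁻¹*(x*F u) + u⁻¹*(x*F u)) := by
  intro u hu x
  have hui : u⁻¹ ≠ 0 := inv_ne_zero' hu
  have h1 := R3 h2 F G hFa hGa hFG hF1 (x*u⁻¹ + u⁻¹*x) u
  have h3 := R3 h2 F G hFa hGa hFG hF1 (x*u + u*x) u⁻¹
  -- the two arguments coincide
  have hargs : (x*u⁻¹ + u⁻¹*x)*u + u*(x*u⁻¹ + u⁻¹*x)
      = (x*u + u*x)*u⁻¹ + u⁻¹*(x*u + u*x) := by
    simp only [add_mul, mul_add]
    rw [ipR2 h2 hu x, ipL1 h2 hu x, ipR1 h2 hu x, ipL2 h2 hu x]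
    rw [asc_zero_iff.mp (asc_xizx h2 hu x), asc_zero_iff.mp (asc_xzxi h2 hu x)]
    abel
  rw [hargs] at h1
  have h13 := h1.symm.trans h3
  -- substitute F(x∘u⁻¹), F(x∘u), F u⁻¹
  have h2a := R3 h2 F G hFa hGa hFG hF1 x u⁻¹
  have h4 := R3 h2 F G hFa hGa hFG hF1 x u
  rw [h2a, h4, Finv h2 F G hFa hGa hFG hF1 u hu] at h13
  simp only [mul_add, mul_neg] at h13
  rw [ipL1 h2 hu (F x), ipL2 h2 hu (F x)] at h13
  apply twoCancelEq h2
  linear_combination (norm := abel) h13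

include h2 hFa hGa hFG hF1 in
lemma lambdaEq : ∀ u s : D, u ≠ 0 →
    (u*s)*((u*u)*((u⁻¹*u⁻¹)*F u)) + (s*u)*((u*u)*((u⁻¹*u⁻¹)*F u))
      + ((u*s)*(u*u))*((u⁻¹*u⁻¹)*F u) + ((u*u)*(s*u))*((u⁻¹*u⁻¹)*F u)
      - ((u*u)*(s*(u*((u⁻¹*u⁻¹)*F u))) + (u*u)*(s*(u*((u⁻¹*u⁻¹)*F u))))
      - (s*(u*(u*(u*((u⁻¹*u⁻¹)*F u)))) + s*(u*(u*(u*((u⁻¹*u⁻¹)*F u))))) = 0 := by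
  intro u s hu
  have hOm := Omega h2 F G hFa hGa hFG hF1 u hu ((u*s)*u)
  have hc : F u = (u*u)*((u⁻¹*u⁻¹)*F u) := (sq_inv_right h2 hu (F u)).symm
  have A1 : ((u*s)*u)*u⁻¹ = u*s := ipR1 h2 hu (u*s)
  have A2 : u⁻¹*((u*s)*u) = s*u := by
    rw [flex u s]; exact ipL2 h2 hu (s*u)
  have A3 : ((u*s)*u)*u = (u*s)*(u*u) := altR u (u*s)
  have A4 : u*((u*s)*u) = (u*u)*(s*u) := by
    rw [flex u s]; exact (altL u (s*u)).symm
  have A5 : u*(((u*s)*u)*((u⁻¹*u⁻¹)*F u)) = (u*u)*(s*(u*((u⁻¹*u⁻¹)*F u))) := by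
    rw [moufL h2 u s ((u⁻¹*u⁻¹)*F u)]
    exact (altL u (s*(u*((u⁻¹*u⁻¹)*F u)))).symm
  have A6 : u⁻¹*(((u*s)*u)*(F u)) = s*(u*(u*(u*((u⁻¹*u⁻¹)*F u)))) := by
    rw [moufL h2 u s (F u), ipL2 h2 hu (s*(u*F u))]
    rw [show u*F u = u*(u*(u*((u⁻¹*u⁻¹)*F u))) from by rw [← altL u ((u⁻¹*u⁻¹)*F u), ← hc]]
  rw [add_mul, add_mul, A1, A2, A3, A4, A5, A6] at hOm
  have hc1 : (u*s)*F u = (u*s)*((u*u)*((u⁻¹*u⁻¹)*F u)) := by conv_lhs => rw [hc]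
  have hc2 : (s*u)*F u = (s*u)*((u*u)*((u⁻¹*u⁻¹)*F u)) := by conv_lhs => rw [hc]
  rw [hc1, hc2] at hOm
  linear_combination (norm := abel) hOm

include h2 hFa hGa hFG hF1 in
lemma commOf : ∀ u : D, F u ≠ 0 → ∀ a : D, u*a = a*u := by
  intro u hFu
  have hu : u ≠ 0 := by
    intro h0
    exact hFu (by rw [h0]; exact F0 F hFa)
  -- e' ≠ 0
  have he : (u⁻¹*u⁻¹)*F u ≠ 0 := by
    intro h0
    apply hFu
    have := sq_inv_right h2 hu (F u)
    rw [h0, mul_zero] at this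
    exact this.symm
  have hue : u*((u⁻¹*u⁻¹)*F u) ≠ 0 := noZD h2 hu he
  -- D2 s = 0 for all s
  apply herstein h2 u
  intro s
  have hl := lambdaEq h2 F G hFa hGa hFG hF1 u s hu
  have hb := bigLemma h2 u s ((u⁻¹*u⁻¹)*F u)
  rw [hl] at hb
  have hz : ((u*u)*s)*(u*((u⁻¹*u⁻¹)*F u))
      - (((u*s)*u)*(u*((u⁻¹*u⁻¹)*F u)) + ((u*s)*u)*(u*((u⁻¹*u⁻¹)*F u)))
      + ((s*u)*u)*(u*((u⁻¹*u⁻¹)*F u)) = 0 := by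
    linear_combination (norm := abel) hb
  have hfact : ((u*u)*s - ((u*s)*u + (u*s)*u) + (s*u)*u) * (u*((u⁻¹*u⁻¹)*F u)) = 0 := by
    rw [add_mul, sub_mul, add_mul]
    linear_combination (norm := abel) hz
  exact mulCancelR h2 hue hfact

include h2 hFa hGa hFG hF1 in
lemma mainReduced (hnc : ∃ a b : D, a * b ≠ b * a) : ∀ x : D, F x = 0 := by
  by_contra hne
  push_neg at hne
  obtain ⟨u, hu⟩ := hne
  obtain ⟨a, b, hab⟩ := hnc
  have hcu := commOf h2 F G hFa hGa hFG hF1 u hu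
  have hFa0 : F a = 0 := by
    by_contra hFa0
    exact hab (commOf h2 F G hFa hGa hFG hF1 a hFa0 b)
  have hFau : F (a + u) ≠ 0 := by
    rw [hFa a u, hFa0, zero_add]
    exact hu
  have hcau := commOf h2 F G hFa hGa hFG hF1 (a+u) hFau
  have h1 := hcau b
  rw [add_mul, mul_add, hcu b] at h1
  exact hab (by linear_combination (norm := abel) h1)

end Func
end ADRF

open ADR ADR2 ADR3 ADR4 ADR5 ADR6 ADRF in
theorem stmt16 (D : Type*) [AlternativeDivisionRing D]
    (hnc : ∃ a b : D, a * b ≠ b * a)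
    (h2 : (1 + 1 : D) ≠ 0)
    (f g : D → D)
    (hf : ∀ x y : D, f (x + y) = f x + f y)
    (hg : ∀ x y : D, g (x + y) = g x + g y)
    (hid : ∀ x : D, x ≠ 0 → f x + (x * x) * g x⁻¹ = 0) :
    (∀ x : D, f x = x * f 1) ∧ (∀ x : D, g x = x * g 1) ∧ g 1 = -f 1 := by
  have inv1 : (1 : D)⁻¹ = 1 := by
    have := mulInv (1:D) one_ne_zero'
    rwa [one_mul] at this
  have hg1 : g 1 = - f 1 := by
    have h := hid 1 one_ne_zero'
    rw [inv1, one_mul, one_mul] at h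
    linear_combination (norm := abel) h
  have hFadd : ∀ x y : D, (f (x+y) - (x+y)*f 1) = (f x - x*f 1) + (f y - y*f 1) := by
    intro x y
    rw [hf, add_mul]
    abel
  have hGadd : ∀ x y : D, (g (x+y) - (x+y)*g 1) = (g x - x*g 1) + (g y - y*g 1) := by
    intro x y
    rw [hg, add_mul]
    abel
  have hFG' : ∀ x : D, x ≠ 0 →
      (f x - x*f 1) + (x*x)*(g x⁻¹ - x⁻¹*g 1) = 0 := by
    intro x hx
    have h := hid x hx
    have e : (x*x)*(x⁻¹ * g 1) = x * g 1 := by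
      rw [altL x (x⁻¹ * g 1), ipL1 h2 hx (g 1)]
    have e2 : x * g 1 = -(x * f 1) := by rw [hg1, mul_neg]
    rw [mul_sub, e, e2]
    linear_combination (norm := abel) h
  have hF1 : f 1 - 1 * f 1 = 0 := by rw [one_mul, sub_self]
  have hFzero := mainReduced h2 (fun x : D => f x - x * f 1) (fun y : D => g y - y * g 1)
    hFadd hGadd hFG' hF1 hnc
  have c1 : ∀ x : D, f x = x * f 1 := by
    intro x
    have := hFzero x
    exact sub_eq_zero.mp this
  have hg0 : g 0 = 0 := by
    have := hg 0 0
    rw [add_zero] at this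
    linear_combination (norm := abel) -this
  have c2 : ∀ x : D, g x = x * g 1 := by
    intro x
    by_cases hx : x = 0
    · rw [hx, zero_mul, hg0]
    · have hxi : x⁻¹ ≠ 0 := inv_ne_zero' hx
      have h := hFG' x⁻¹ hxi
      have hz : f x⁻¹ - x⁻¹ * f 1 = 0 := hFzero x⁻¹
      rw [inv_inv' h2 hx, hz, zero_add] at h
      have := congrArg (fun t => (x*x) * t) h
      simp only [mul_zero] at this
      rw [sq_inv_right h2 hx] at this
      exact sub_eq_zero.mp this
  exact ⟨c1, c2, hg1⟩
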